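/- Let A be a C*-algebra and a, b ∈ A positive with b ≠ 0. Suppose that for every continuous function f : [0, ‖b‖] → [0,1] with f(0) = 0 and f(‖b‖) ≠ 0 one has a ≾ f(b) (Cuntz subequivalence). Then there is a sequence (z_n) in A with ‖z_n‖ = (‖a‖/‖b‖)^{1/2} for all n and z_n* b z_n → a in norm. -/

import Mathlib

open Filter Topology

/-- Cuntz subequivalence of positive elements: `a ≾ b` iff there is a sequence `(w_n)`
with `w_n* b w_n → a`. -/
def CuntzLE {A : Type*} [NonUnitalCStarAlgebra A] (a b : A) : Prop :=
  ∃ w : ℕ → A, Tendsto (fun n => star (w n) * b * w n) atTop (𝓝 a)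

set_option maxHeartbeats 1000000 in
/-- Auxiliary quantitative step: for each `ε > 0` one can find a single element `z` of the
exact norm `√(‖a‖/‖b‖)` with `‖z* b z - a‖ < ε`. -/
theorem cuntzLE_norm_control_aux {A : Type*} [NonUnitalCStarAlgebra A]
    [PartialOrder A] [StarOrderedRing A] (a b : A) (hb : 0 ≤ b)
    (hbne : b ≠ 0) (hane : a ≠ 0)
    (hyp : ∀ f : ℝ → ℝ, ContinuousOn f (Set.Icc 0 ‖b‖) →
      (∀ t ∈ Set.Icc (0:ℝ) ‖b‖, f t ∈ Set.Icc (0:ℝ) 1) →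
      f 0 = 0 → f ‖b‖ ≠ 0 → CuntzLE a (cfcₙ f b))
    (ε : ℝ) (hε : 0 < ε) :
    ∃ z : A, ‖z‖ = Real.sqrt (‖a‖ / ‖b‖) ∧ ‖star z * b * z - a‖ < ε := by
  have hβ : (0:ℝ) < ‖b‖ := norm_pos_iff.mpr hbne
  have hα : (0:ℝ) < ‖a‖ := norm_pos_iff.mpr hane
  have hb' : IsSelfAdjoint b := IsSelfAdjoint.of_nonneg hb
  -- quasispectrum is contained in [0, ‖b‖]
  have hspec : ∀ x ∈ quasispectrum ℝ b, x ∈ Set.Icc (0:ℝ) ‖b‖ := by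
    intro x hx
    refine ⟨quasispectrum_nonneg_of_nonneg b hb x hx, ?_⟩
    have h1 : ‖x‖ ≤ ‖b‖ := by
      rw [Unitization.quasispectrum_eq_spectrum_inr' ℝ ℂ] at hx
      simpa [Unitization.norm_inr] using spectrum.norm_le_norm_of_mem hx
    exact (le_abs_self x).trans (by rwa [Real.norm_eq_abs] at h1)
  set α : ℝ := ‖a‖ with hαdef
  set β : ℝ := ‖b‖ with hβdef
  set ε' : ℝ := min (α/2) (ε/12) with hε'def
  have hε'pos : 0 < ε' := lt_min (by positivity) (by positivity)
  have hε'le1 : ε' ≤ α/2 := min_le_left _ _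
  have hε'le2 : ε' ≤ ε/12 := min_le_right _ _
  set δ : ℝ := min (β/2) (ε*β/(9*α)) with hδdef
  have hδpos : 0 < δ := lt_min (by positivity) (by positivity)
  have hδle1 : δ ≤ β/2 := min_le_left _ _
  have hδle2 : δ ≤ ε*β/(9*α) := min_le_right _ _
  set f : ℝ → ℝ := fun t => max 0 (min 1 ((t - (β - δ/2)) / (δ/2))) with hfdef
  set e : ℝ → ℝ := fun t => max 0 (min 1 ((t - (β - δ)) / (δ/2))) with hedef
  set m : ℝ → ℝ := fun t => e t / Real.sqrt t with hmdef
  set g : ℝ → ℝ := fun t => m t * Real.sqrt (f t) with hgdef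
  have hfcont : Continuous f :=
    continuous_const.max (continuous_const.min ((continuous_id.sub continuous_const).div_const _))
  have hecont : Continuous e :=
    continuous_const.max (continuous_const.min ((continuous_id.sub continuous_const).div_const _))
  have hf0le : ∀ t, 0 ≤ f t := fun t => le_max_left _ _
  have hfle1 : ∀ t, f t ≤ 1 := fun t => max_le zero_le_one (min_le_left _ _)
  have he0le : ∀ t, 0 ≤ e t := fun t => le_max_left _ _
  have hele1 : ∀ t, e t ≤ 1 := fun t => max_le zero_le_one (min_le_left _ _)
  have hfzero : ∀ t ≤ β - δ/2, f t = 0 := by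
    intro t ht
    apply max_eq_left
    refine (min_le_right _ _).trans ?_
    apply div_nonpos_of_nonpos_of_nonneg
    · linarith
    · positivity
  have hezero : ∀ t ≤ β - δ, e t = 0 := by
    intro t ht
    apply max_eq_left
    refine (min_le_right _ _).trans ?_
    apply div_nonpos_of_nonpos_of_nonneg
    · linarith
    · positivity
  have heone : ∀ t, β - δ/2 ≤ t → e t = 1 := by
    intro t ht
    have h1 : (1:ℝ) ≤ (t - (β - δ)) / (δ/2) := by
      rw [le_div_iff₀ (by positivity)]
      linarith
    rw [hedef]
    simp only [min_eq_left h1, max_eq_right (zero_le_one)]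
  have hf0 : f 0 = 0 := hfzero 0 (by linarith)
  have hfβ : f β = 1 := by
    have h1 : (1:ℝ) ≤ (β - (β - δ/2)) / (δ/2) := by
      rw [le_div_iff₀ (by positivity)]; linarith
    rw [hfdef]
    simp only [min_eq_left h1, max_eq_right (zero_le_one)]
  have hmcont : Continuous m := by
    rw [continuous_iff_continuousAt]
    intro t
    rcases lt_or_ge t (β - δ) with ht | ht
    · have hev : m =ᶠ[𝓝 t] fun _ => 0 := by
        filter_upwards [Iio_mem_nhds ht] with s hs
        simp [hmdef, hezero s hs.le]
      exact (continuousAt_congr hev).mpr continuousAt_const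
    · have htpos : 0 < t := by linarith
      exact (hecont.continuousAt).div (Real.continuous_sqrt.continuousAt)
        (Real.sqrt_ne_zero'.mpr htpos)
  have hm0 : m 0 = 0 := by simp [hmdef]
  have hgcont : Continuous g := hmcont.mul (Real.continuous_sqrt.comp hfcont)
  have hg0 : g 0 = 0 := by simp [hgdef, hm0]
  -- key pointwise identity
  have hkey : ∀ t ∈ Set.Icc (0:ℝ) β, g t * t * g t = f t := by
    intro t ht
    rcases le_or_gt t (β - δ/2) with h | h
    · have hft : f t = 0 := hfzero t h
      simp [hgdef, hft]
    · have htpos : 0 < t := by linarith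
      have het : e t = 1 := heone t h.le
      have hst : Real.sqrt t * Real.sqrt t = t := Real.mul_self_sqrt htpos.le
      have hsf : Real.sqrt (f t) * Real.sqrt (f t) = f t := Real.mul_self_sqrt (hf0le t)
      have hstne : Real.sqrt t ≠ 0 := Real.sqrt_ne_zero'.mpr htpos
      rw [hgdef]
      simp only [hmdef, het]
      field_simp
      linear_combination t * hsf - f t * hst
  obtain ⟨w, hw⟩ := hyp f hfcont.continuousOn
    (fun t _ => ⟨hf0le t, hfle1 t⟩) hf0 (by rw [hfβ]; exact one_ne_zero)
  obtain ⟨N, hN⟩ := (hw.eventually_mem (Metric.ball_mem_nhds a hε'pos)).exists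
  rw [Metric.mem_ball, dist_eq_norm] at hN
  set y : A := star (w N) * cfcₙ f b * w N with hydef
  have hy : ‖y - a‖ < ε' := hN
  -- cfcₙ facts
  have hgsa' : IsSelfAdjoint (cfcₙ g b) := cfcₙ_predicate g b
  have hgsa : star (cfcₙ g b) = cfcₙ g b := hgsa'.star_eq
  have hsfsa' : IsSelfAdjoint (cfcₙ (fun t => Real.sqrt (f t)) b) := cfcₙ_predicate _ b
  have hsfsa : star (cfcₙ (fun t => Real.sqrt (f t)) b) = cfcₙ (fun t => Real.sqrt (f t)) b :=
    hsfsa'.star_eq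
  have hsfmul : cfcₙ (fun t => Real.sqrt (f t)) b * cfcₙ (fun t => Real.sqrt (f t)) b
      = cfcₙ f b := by
    rw [← cfcₙ_mul (fun t => Real.sqrt (f t)) (fun t => Real.sqrt (f t)) b
      (Real.continuous_sqrt.comp hfcont).continuousOn (by simp [hf0])
      (Real.continuous_sqrt.comp hfcont).continuousOn (by simp [hf0])]
    exact cfcₙ_congr fun t _ => Real.mul_self_sqrt (hf0le t)
  have hgbg : cfcₙ g b * b * cfcₙ g b = cfcₙ f b := by
    have h1 : cfcₙ g b * b = cfcₙ (fun t => g t * t) b := by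
      have h2 := cfcₙ_mul g (fun t => t) b hgcont.continuousOn hg0
        continuous_id.continuousOn rfl
      rw [cfcₙ_id' ℝ b hb'] at h2
      exact h2.symm
    rw [h1, ← cfcₙ_mul (fun t => g t * t) g b (hgcont.mul continuous_id).continuousOn
      (by simp [hg0]) hgcont.continuousOn hg0]
    exact cfcₙ_congr fun t ht => hkey t (hspec t ht)
  have hgfac : cfcₙ g b = cfcₙ m b * cfcₙ (fun t => Real.sqrt (f t)) b :=
    cfcₙ_mul m (fun t => Real.sqrt (f t)) b hmcont.continuousOn hm0
      (Real.continuous_sqrt.comp hfcont).continuousOn (by simp [hf0])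
  set z₀ : A := cfcₙ g b * w N with hz₀def
  have hz₀y : star z₀ * b * z₀ = y := by
    rw [hz₀def, hydef, star_mul, hgsa, ← hgbg]
    simp only [mul_assoc]
  set d : A := cfcₙ (fun t => Real.sqrt (f t)) b * w N with hddef
  have hd2 : ‖d‖ * ‖d‖ = ‖y‖ := by
    rw [← CStarRing.norm_star_mul_self (x := d)]
    congr 1
    rw [hddef, hydef, star_mul, hsfsa, ← hsfmul]
    simp only [mul_assoc]
  set s : ℝ := Real.sqrt (β - δ) with hsdef
  have hspos : 0 < s := Real.sqrt_pos.mpr (by linarith)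
  have hss : s * s = β - δ := Real.mul_self_sqrt (by linarith)
  have hmnorm : ‖cfcₙ m b‖ ≤ 1 / s := by
    apply norm_cfcₙ_le
    intro x hx
    obtain ⟨hx0, hxβ⟩ := hspec x hx
    rcases le_or_gt x (β - δ) with hcase | hcase
    · rw [hmdef]
      simp only [hezero x hcase, zero_div, norm_zero]
      positivity
    · have hxpos : 0 < x := by linarith
      rw [hmdef, Real.norm_eq_abs,
        abs_of_nonneg (div_nonneg (he0le x) (Real.sqrt_nonneg x))]
      exact div_le_div₀ zero_le_one (hele1 x) hspos
        (Real.sqrt_le_sqrt (by linarith))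
  have hz₀le : ‖z₀‖ ≤ (1 / s) * ‖d‖ := by
    rw [hz₀def, hgfac, mul_assoc, ← hddef]
    exact (norm_mul_le _ _).trans (mul_le_mul_of_nonneg_right hmnorm (norm_nonneg d))
  have hinv : (1 / s) * s = 1 := one_div_mul_cancel hspos.ne'
  have hz₀sq : ‖z₀‖ * ‖z₀‖ * (β - δ) ≤ ‖y‖ := by
    have h4 : ‖z₀‖ * ‖z₀‖ ≤ (1/s*‖d‖) * (1/s*‖d‖) :=
      mul_le_mul hz₀le hz₀le (norm_nonneg _) (by positivity)
    calc ‖z₀‖ * ‖z₀‖ * (β - δ)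
        ≤ (1/s*‖d‖) * (1/s*‖d‖) * (β - δ) :=
          mul_le_mul_of_nonneg_right h4 (by linarith)
      _ = (1/s*s) * (1/s*s) * (‖d‖*‖d‖) := by rw [← hss]; ring
      _ = ‖y‖ := by rw [hinv, hd2]; ring
  have hyup : ‖y‖ ≤ ‖z₀‖ * ‖z₀‖ * β := by
    rw [← hz₀y]
    calc ‖star z₀ * b * z₀‖ ≤ ‖star z₀ * b‖ * ‖z₀‖ := norm_mul_le _ _
      _ ≤ (‖star z₀‖ * ‖b‖) * ‖z₀‖ :=
          mul_le_mul_of_nonneg_right (norm_mul_le _ _) (norm_nonneg _)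
      _ = ‖z₀‖ * ‖z₀‖ * β := by rw [norm_star]; ring
  have hylow : α - ε' ≤ ‖y‖ := by
    have h3 := abs_norm_sub_norm_le y a
    rw [abs_le] at h3
    linarith [h3.1, hy]
  have hyhigh : ‖y‖ ≤ α + ε' := by
    have h3 := abs_norm_sub_norm_le y a
    rw [abs_le] at h3
    linarith [h3.2, hy]
  have hz₀pos : 0 < ‖z₀‖ := by
    rcases (norm_nonneg z₀).lt_or_eq with h | h
    · exact h
    · exfalso
      rw [← h] at hyup
      simp only [mul_zero, zero_mul] at hyup
      nlinarith
  set c : ℝ := Real.sqrt (α / β) / ‖z₀‖ with hcdef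
  have hcpos : 0 < c := div_pos (Real.sqrt_pos.mpr (by positivity)) hz₀pos
  have hcc : c * c * (‖z₀‖ * ‖z₀‖) * β = α := by
    have hs2 : Real.sqrt (α/β) * Real.sqrt (α/β) = α/β :=
      Real.mul_self_sqrt (by positivity)
    rw [hcdef, div_mul_div_comm, hs2,
      div_mul_cancel₀ _ (ne_of_gt (mul_pos hz₀pos hz₀pos)),
      div_mul_cancel₀ _ hβ.ne']
  refine ⟨c • z₀, ?_, ?_⟩
  · rw [norm_smul, Real.norm_eq_abs, abs_of_nonneg hcpos.le, hcdef,
      div_mul_cancel₀ _ hz₀pos.ne']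
  · have hzbz : star (c • z₀) * b * (c • z₀) = (c * c) • y := by
      rw [star_smul, star_trivial]
      rw [smul_mul_assoc, smul_mul_assoc, mul_smul_comm, smul_smul, hz₀y]
    rw [hzbz]
    have hsplit : (c * c) • y - a = ((c * c - 1) • y) + (y - a) := by
      rw [sub_smul, one_smul]; abel
    rw [hsplit]
    calc ‖(c * c - 1) • y + (y - a)‖ ≤ ‖(c * c - 1) • y‖ + ‖y - a‖ := norm_add_le _ _
      _ = |c * c - 1| * ‖y‖ + ‖y - a‖ := by rw [norm_smul, Real.norm_eq_abs]
      _ < ε := by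
          rcases abs_cases (c * c - 1) with ⟨habs, hsign⟩ | ⟨habs, hsign⟩
          · rw [habs]
            nlinarith [mul_le_mul_of_nonneg_left hyup
              (by linarith : (0:ℝ) ≤ c * c - 1), hy, hylow, hε'le2, hε]
          · rw [habs]
            have hZβ3 : ‖z₀‖ * ‖z₀‖ * β ≤ 3 * α := by
              nlinarith [mul_le_mul_of_nonneg_left
                (show β/2 ≤ β - δ by linarith)
                (by positivity : (0:ℝ) ≤ ‖z₀‖ * ‖z₀‖), hz₀sq, hyhigh, hε'le1]
            have hZδ : ‖z₀‖ * ‖z₀‖ * δ ≤ ε / 3 := by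
              have hZle : ‖z₀‖ * ‖z₀‖ ≤ 3 * α / β := (le_div_iff₀ hβ).mpr hZβ3
              calc ‖z₀‖ * ‖z₀‖ * δ ≤ (3 * α / β) * (ε * β / (9 * α)) :=
                    mul_le_mul hZle hδle2 hδpos.le (by positivity)
                _ = ε / 3 := by
                    rw [div_mul_div_comm,
                      div_eq_div_iff (by positivity : (0:ℝ) < β * (9 * α)).ne'
                        (by norm_num : (3:ℝ) ≠ 0)]
                    ring
            nlinarith [mul_le_mul_of_nonneg_left hz₀sq
                (by positivity : (0:ℝ) ≤ c * c),
              mul_le_mul_of_nonneg_right hsign.le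
                (by positivity : (0:ℝ) ≤ ‖z₀‖ * ‖z₀‖ * δ),
              hy, hyhigh, hε'le2, hZδ, hcc]

/-- If `a, b ≥ 0`, `b ≠ 0`, and `a ≾ f(b)` for every continuous `f : [0,‖b‖] → [0,1]`
with `f 0 = 0` and `f ‖b‖ ≠ 0`, then there is a sequence `(z_n)` with
`‖z_n‖ = (‖a‖/‖b‖)^{1/2}` and `z_n* b z_n → a`. -/
theorem cuntzLE_with_norm_control {A : Type*} [NonUnitalCStarAlgebra A]
    [PartialOrder A] [StarOrderedRing A] (a b : A) (ha : 0 ≤ a) (hb : 0 ≤ b)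
    (hbne : b ≠ 0)
    (hyp : ∀ f : ℝ → ℝ, ContinuousOn f (Set.Icc 0 ‖b‖) →
      (∀ t ∈ Set.Icc (0:ℝ) ‖b‖, f t ∈ Set.Icc (0:ℝ) 1) →
      f 0 = 0 → f ‖b‖ ≠ 0 → CuntzLE a (cfcₙ f b)) :
    ∃ z : ℕ → A, (∀ n, ‖z n‖ = Real.sqrt (‖a‖ / ‖b‖)) ∧
      Filter.Tendsto (fun n => star (z n) * b * z n) Filter.atTop (𝓝 a) := by
  by_cases hane : a = 0
  · subst hane
    exact ⟨fun _ => 0, fun n => by simp,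
      by simpa using (tendsto_const_nhds : Tendsto (fun _ : ℕ => (0:A)) atTop (𝓝 0))⟩
  choose Z hZ1 hZ2 using fun n : ℕ =>
    cuntzLE_norm_control_aux a b hb hbne hane hyp (1/(n+1)) (by positivity)
  refine ⟨Z, hZ1, ?_⟩
  rw [tendsto_iff_norm_sub_tendsto_zero]
  exact squeeze_zero (fun n => norm_nonneg _) (fun n => (hZ2 n).le)
    tendsto_one_div_add_atTop_nhds_zero_nat
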